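/- arXiv:1906.08925 — 4 statements merged into one kernel-verified Lean document; each statement's English description precedes it below -/
import Mathlib

section
/- Let C_d > 0 and u_m > 0. Let x, v : ℝ → ℝ be differentiable with x(0) = 0, v(0) = u_m/C_d, and satisfying x′(t) = v(t), v′(t) = −u_m − C_d·v(t) for all t ≥ 0 (worst-case motion toward an obstacle at top speed under maximal reverse acceleration with drag). Then v(ln 2 / C_d) = 0, x(ln 2 / C_d) = u_m(1 − ln 2)/C_d², and x(t) ≤ u_m(1 − ln 2)/C_d² for all t ≥ 0; i.e., the maximum distance traveled in the direction of initial motion is ρ̄ = u_m(1 − ln 2)/C_d². -/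
lemma const_of_deriv_zero (f : ℝ → ℝ) (hf : Differentiable ℝ f)
    (h : ∀ t, 0 ≤ t → deriv f t = 0) : ∀ t, 0 ≤ t → f t = f 0 := by
  intro t ht
  refine constant_of_has_deriv_right_zero (f := f) (a := 0) (b := t)
    hf.continuous.continuousOn ?_ t (by simp [ht])
  intro s hs
  have hd : HasDerivAt f 0 s := by
    have := (hf s).hasDerivAt
    rwa [h s hs.1] at this
  exact hd.hasDerivWithinAt



/-- Worst-case stopping: with x′ = v, v′ = −u_m − C_d v, x(0) = 0,
v(0) = u_m/C_d, the agent stops at time ln 2/C_d having traveled u_m(1 − ln 2)/C_d²,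
and x(t) never exceeds this distance for t ≥ 0. -/
theorem stmt_8 (Cd um : ℝ) (hCd : 0 < Cd) (hum : 0 < um)
    (x v : ℝ → ℝ) (hx : Differentiable ℝ x) (hv : Differentiable ℝ v)
    (hx0 : x 0 = 0) (hv0 : v 0 = um / Cd)
    (hdx : ∀ t, 0 ≤ t → deriv x t = v t)
    (hdv : ∀ t, 0 ≤ t → deriv v t = -um - Cd * v t) :
    v (Real.log 2 / Cd) = 0 ∧
    x (Real.log 2 / Cd) = um * (1 - Real.log 2) / Cd ^ 2 ∧
    (∀ t, 0 ≤ t → x t ≤ um * (1 - Real.log 2) / Cd ^ 2) := by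
  have hCd' := hCd.ne'
  -- step 1: v formula
  set g : ℝ → ℝ := fun t => Real.exp (Cd * t) * (v t + um / Cd) with hg
  have hgdiff : Differentiable ℝ g := by
    have : Differentiable ℝ (fun t => Real.exp (Cd * t)) :=
      (Real.differentiable_exp.comp (differentiable_id.const_mul Cd))
    exact this.mul (hv.add_const _)
  have hgd : ∀ t, 0 ≤ t → deriv g t = 0 := by
    intro t ht
    have h1 : HasDerivAt (fun t => Real.exp (Cd * t)) (Cd * Real.exp (Cd * t)) t := by
      have := ((hasDerivAt_id t).const_mul Cd).exp
      simpa [mul_comm] using this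
    have h2 : HasDerivAt (fun t => v t + um / Cd) (deriv v t) t :=
      ((hv t).hasDerivAt).add_const _
    have h3 : HasDerivAt g _ t := h1.mul h2
    rw [h3.deriv, hdv t ht]
    field_simp
    ring
  have hvform : ∀ t, 0 ≤ t → v t = 2 * um / Cd * Real.exp (-(Cd * t)) - um / Cd := by
    intro t ht
    have h0 := const_of_deriv_zero g hgdiff hgd t ht
    have hg0 : g 0 = 2 * um / Cd := by simp [hg, hv0]; ring
    rw [hg0] at h0
    simp only [hg] at h0
    have hee : Real.exp (Cd * t) * Real.exp (-(Cd * t)) = 1 := by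
      rw [← Real.exp_add]; simp
    linear_combination Real.exp (-(Cd * t)) * h0 - (v t + um / Cd) * hee
  -- step 2: x formula
  set w : ℝ → ℝ := fun t => x t + 2 * um / Cd ^ 2 * Real.exp (-(Cd * t)) + um / Cd * t with hw
  have hwdiff : Differentiable ℝ w := by
    have : Differentiable ℝ (fun t => Real.exp (-(Cd * t))) :=
      Real.differentiable_exp.comp ((differentiable_id.const_mul Cd).neg)
    exact (hx.add ((this.const_mul _))).add ((differentiable_id.const_mul _))
  have hwd : ∀ t, 0 ≤ t → deriv w t = 0 := by
    intro t ht
    have h1 : HasDerivAt (fun t => Real.exp (-(Cd * t))) (-Cd * Real.exp (-(Cd * t))) t := by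
      have := (((hasDerivAt_id t).const_mul Cd).neg).exp
      simpa [mul_comm] using this
    have h2 : HasDerivAt w (deriv x t + 2 * um / Cd ^ 2 * (-Cd * Real.exp (-(Cd * t))) + um / Cd) t := by
      have := (((hx t).hasDerivAt).add ((h1.const_mul (2 * um / Cd ^ 2)))).add
        (((hasDerivAt_id t).const_mul (um / Cd)))
      exact this.congr_deriv (by ring)
    rw [h2.deriv, hdx t ht, hvform t ht]
    field_simp
    ring
  have hxform : ∀ t, 0 ≤ t →
      x t = 2 * um / Cd ^ 2 - 2 * um / Cd ^ 2 * Real.exp (-(Cd * t)) - um / Cd * t := by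
    intro t ht
    have := const_of_deriv_zero w hwdiff hwd t ht
    have hw0 : w 0 = 2 * um / Cd ^ 2 := by simp [hw, hx0]
    rw [hw0] at this
    simp only [hw] at this
    linarith
  have hT : (0:ℝ) ≤ Real.log 2 / Cd :=
    div_nonneg (Real.log_nonneg (by norm_num)) hCd.le
  have hCdT : Cd * (Real.log 2 / Cd) = Real.log 2 := by field_simp
  have hexpT : Real.exp (-(Cd * (Real.log 2 / Cd))) = 1 / 2 := by
    rw [hCdT, Real.exp_neg, Real.exp_log (by norm_num)]
    norm_num
  refine ⟨?_, ?_, ?_⟩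
  · rw [hvform _ hT, hexpT]; field_simp; ring
  · rw [hxform _ hT, hexpT]; field_simp; ring
  · intro t ht
    rw [hxform t ht]
    have key : Real.log 2 - Cd * t + 1 ≤ 2 * Real.exp (-(Cd * t)) := by
      have h := Real.add_one_le_exp (Real.log 2 - Cd * t)
      rwa [Real.exp_sub, Real.exp_log (by norm_num : (0:ℝ) < 2), div_eq_mul_inv,
        ← Real.exp_neg] at h

    have hsc : 2 - 2 * Real.exp (-(Cd * t)) - Cd * t ≤ 1 - Real.log 2 := by linarith
    have hp : (0:ℝ) ≤ um / Cd ^ 2 := by positivity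
    calc 2 * um / Cd ^ 2 - 2 * um / Cd ^ 2 * Real.exp (-(Cd * t)) - um / Cd * t
        = (2 - 2 * Real.exp (-(Cd * t)) - Cd * t) * (um / Cd ^ 2) := by
          field_simp
      _ ≤ (1 - Real.log 2) * (um / Cd ^ 2) := mul_le_mul_of_nonneg_right hsc hp
      _ = um * (1 - Real.log 2) / Cd ^ 2 := by ring
end

section
/- Let k₁, k₂ > 0, let α₂ ∈ (0,1) and α₁ = α₂/(2−α₂), and define sig^α(x) = ‖x‖^{α−1} x for x ∈ ℝ² \ {0} and sig^α(0) = 0. Then for every pair of differentiable functions r, v : ℝ≥0 → ℝ² satisfying ṙ(t) = v(t) and v̇(t) = −k₂ sig^{α₂}(v(t)) − k₁ sig^{α₁}(r(t)) for all t ≥ 0, there exists a finite time T ≥ 0 such that r(t) = 0 and v(t) = 0 for all t ≥ T; i.e., the origin (r, v) = (0, 0) is globally finite-time stable. -/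
open Real Filter Asymptotics

lemma aux_littleO_rpow {f g : ℝ → ℝ} {l : Filter ℝ} {p : ℝ} (hp : 1 < p)
    (h : f =O[l] g) (hf : ∀ x, 0 ≤ f x) (hg : Filter.Tendsto g l (nhds 0)) :
    (fun x => f x ^ p) =o[l] g := by
  have hf0 : Filter.Tendsto f l (nhds 0) := h.trans_tendsto hg
  have h1 : Filter.Tendsto (fun x => f x ^ (p - 1)) l (nhds 0) := by
    have hc : ContinuousAt (fun x : ℝ => x ^ (p - 1)) 0 :=
      Real.continuousAt_rpow_const 0 (p - 1) (Or.inr (by linarith))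
    have := hc.tendsto.comp hf0
    simpa [Function.comp_def, Real.zero_rpow (by linarith : p - 1 ≠ 0)] using this
  have h2 : (fun x => f x ^ (p - 1)) =o[l] (fun _ => (1 : ℝ)) :=
    (Asymptotics.isLittleO_one_iff ℝ).2 h1
  have h3 : (fun x => f x * f x ^ (p - 1)) =o[l] (fun x => g x * 1) :=
    h.mul_isLittleO h2
  have heq : ∀ x, f x ^ p = f x * f x ^ (p - 1) := by
    intro x
    have : f x ^ (1 + (p - 1)) = f x ^ (1 : ℝ) * f x ^ (p - 1) :=
      Real.rpow_add' (hf x) (by linarith)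
    simpa [Real.rpow_one] using this
  simpa [heq] using h3
lemma aux_norm_rpow_hasDerivAt {E : Type*} [NormedAddCommGroup E] [InnerProductSpace ℝ E]
    {g : ℝ → E} {g' : E} {t p : ℝ} (hp : 1 < p) (hg : HasDerivAt g g' t) :
    HasDerivAt (fun u => ‖g u‖ ^ p) (p * ‖g t‖ ^ (p - 2) * (inner ℝ (g t) g' : ℝ)) t := by
  rcases eq_or_ne (g t) 0 with h0 | h0
  · have hD : p * ‖g t‖ ^ (p - 2) * (inner ℝ (g t) g' : ℝ) = 0 := by
      simp [h0]
    rw [hD, hasDerivAt_iff_isLittleO]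
    have hO : (fun u => ‖g u‖) =O[nhds t] (fun u => u - t) := by
      have := hg.isBigO_sub
      rw [h0] at this
      simpa using this.norm_left
    have hsmall : (fun u => ‖g u‖ ^ p) =o[nhds t] (fun u => u - t) :=
      aux_littleO_rpow hp hO (fun x => norm_nonneg _)
        (by
          have : Filter.Tendsto (fun u : ℝ => u - t) (nhds t) (nhds (t - t)) :=
            (continuous_id.sub continuous_const).tendsto t
          simpa using this)
    simpa [h0, Real.zero_rpow (by linarith : p ≠ 0)] using hsmall
  · have hn : (0:ℝ) < ‖g t‖ := norm_pos_iff.2 h0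
    have hinner : HasDerivAt (fun u => (inner ℝ (g u) (g u) : ℝ))
        ((2 : ℝ) * (inner ℝ (g t) g' : ℝ)) t := by
      have := (hg.inner ℝ hg)
      rw [real_inner_comm (g t) g', ← two_mul] at this
      exact this
    have hne : (inner ℝ (g t) (g t) : ℝ) ≠ 0 := by
      rw [real_inner_self_eq_norm_sq]
      positivity
    have hcomp := (Real.hasDerivAt_rpow_const (p := p / 2) (Or.inl hne)).comp t hinner
    simp only [Function.comp_def] at hcomp
    have hfun : (fun u => (inner ℝ (g u) (g u) : ℝ) ^ (p / 2)) = fun u => ‖g u‖ ^ p := by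
      funext u
      rw [real_inner_self_eq_norm_sq, ← Real.rpow_natCast (‖g u‖) 2,
        ← Real.rpow_mul (norm_nonneg _),
        show ((2:ℕ):ℝ) * (p / 2) = p by push_cast; ring]
    have hval : p / 2 * (inner ℝ (g t) (g t) : ℝ) ^ (p / 2 - 1) * ((2:ℝ) * (inner ℝ (g t) g' : ℝ))
        = p * ‖g t‖ ^ (p - 2) * (inner ℝ (g t) g' : ℝ) := by
      rw [real_inner_self_eq_norm_sq, ← Real.rpow_natCast (‖g t‖) 2,
        ← Real.rpow_mul (norm_nonneg _),
        show ((2:ℕ):ℝ) * (p / 2 - 1) = p - 2 by push_cast; ring]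
      ring
    rw [← hfun, ← hval]
    exact hcomp
lemma aux_rpow_nonneg_hasDerivAt {f : ℝ → ℝ} {f' t s : ℝ} (hs : 1 < s)
    (hf : HasDerivAt f f' t) (h0 : ∀ u, 0 ≤ f u) :
    HasDerivAt (fun u => f u ^ s) (s * f t ^ (s - 1) * f') t := by
  rcases eq_or_ne (f t) 0 with hft | hft
  · have hf'0 : f' = 0 := by
      refine IsLocalMin.hasDerivAt_eq_zero ?_ hf
      exact Filter.Eventually.of_forall (fun u => hft ▸ h0 u)
    have hD : s * f t ^ (s - 1) * f' = 0 := by rw [hf'0]; ring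
    rw [hD, hasDerivAt_iff_isLittleO]
    have hlo : (fun u => f u) =o[nhds t] (fun u => u - t) := by
      have := hasDerivAt_iff_isLittleO.1 hf
      simpa [hft, hf'0] using this
    have hsmall : (fun u => f u ^ s) =o[nhds t] (fun u => u - t) :=
      aux_littleO_rpow hs hlo.isBigO h0
        (by
          have : Filter.Tendsto (fun u : ℝ => u - t) (nhds t) (nhds (t - t)) :=
            (continuous_id.sub continuous_const).tendsto t
          simpa using this)
    simpa [hft, Real.zero_rpow (by linarith : s ≠ 0)] using hsmall
  · have hcomp := (Real.hasDerivAt_rpow_const (p := s) (Or.inl hft)).comp t hf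
    simpa [Function.comp_def, mul_comm, mul_assoc, mul_left_comm] using hcomp
lemma aux_finite_time {W : ℝ → ℝ} {c θ : ℝ} (hc : 0 < c) (hθ0 : 0 < θ) (hθ1 : θ < 1)
    (hW : Differentiable ℝ W) (hWnn : ∀ t, 0 ≤ t → 0 ≤ W t)
    (hW' : ∀ t, 0 < t → deriv W t ≤ -c * W t ^ θ) :
    ∃ T, 0 ≤ T ∧ ∀ t, T ≤ t → W t = 0 := by
  set T : ℝ := W 0 ^ (1 - θ) / (c * (1 - θ)) with hTdef
  have hc1θ : 0 < c * (1 - θ) := by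
    apply mul_pos hc; linarith
  have hT0 : 0 ≤ T := div_nonneg (Real.rpow_nonneg (hWnn 0 le_rfl) _) hc1θ.le
  have anti : AntitoneOn W (Set.Ici 0) := by
    apply antitoneOn_of_deriv_nonpos (convex_Ici 0) hW.continuous.continuousOn
      (hW.differentiableOn)
    intro x hx
    rw [interior_Ici] at hx
    have := hW' x hx
    have h1 : 0 ≤ W x ^ θ := Real.rpow_nonneg (hWnn x hx.le) _
    nlinarith
  have hWT : W T = 0 := by
    by_contra hne
    have hpos : 0 < W T := lt_of_le_of_ne (hWnn T hT0) (Ne.symm hne)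
    have hall : ∀ u ∈ Set.Icc (0:ℝ) T, 0 < W u := by
      intro u hu
      exact lt_of_lt_of_le hpos (anti hu.1 (Set.mem_Ici.2 hT0) hu.2)
    set G : ℝ → ℝ := fun u => W u ^ (1 - θ) + c * (1 - θ) * u with hGdef
    have hGd : ∀ x ∈ Set.Ioo (0:ℝ) T, HasDerivAt G
        ((1 - θ) * W x ^ (1 - θ - 1) * deriv W x + c * (1 - θ)) x := by
      intro x hx
      have h1 : HasDerivAt (fun u => W u ^ (1 - θ))
          ((1 - θ) * W x ^ (1 - θ - 1) * deriv W x) x := by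
        have := (Real.hasDerivAt_rpow_const (p := 1 - θ)
          (Or.inl (hall x (Set.mem_Icc_of_Ioo hx)).ne')).comp x (hW x).hasDerivAt
        simpa [Function.comp_def, mul_comm, mul_assoc, mul_left_comm] using this
      have h2 : HasDerivAt (fun u => c * (1 - θ) * u) (c * (1 - θ)) x := by
        simpa using (hasDerivAt_id x).const_mul (c * (1 - θ))
      exact h1.add h2
    have antiG : AntitoneOn G (Set.Icc 0 T) := by
      apply antitoneOn_of_deriv_nonpos (convex_Icc 0 T)
      · apply ContinuousOn.add
        · exact (hW.continuous.continuousOn).rpow_const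
            (fun x _ => Or.inr (by linarith))
        · exact (continuous_const.mul continuous_id).continuousOn
      · intro x hx
        rw [interior_Icc] at hx
        exact ((hGd x hx).differentiableAt).differentiableWithinAt
      · intro x hx
        rw [interior_Icc] at hx
        rw [(hGd x hx).deriv]
        have hWx : 0 < W x := hall x (Set.mem_Icc_of_Ioo hx)
        have hd := hW' x hx.1
        have h1θ : (0:ℝ) < 1 - θ := by linarith
        have hpow : 0 < W x ^ (1 - θ - 1) := Real.rpow_pos_of_pos hWx _
        have key : (1 - θ) * W x ^ (1 - θ - 1) * deriv W x ≤
            (1 - θ) * W x ^ (1 - θ - 1) * (-c * W x ^ θ) := by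
          apply mul_le_mul_of_nonneg_left hd
          positivity
        have heq : (1 - θ) * W x ^ (1 - θ - 1) * (-c * W x ^ θ) = -(c * (1 - θ)) := by
          have : W x ^ (1 - θ - 1) * W x ^ θ = W x ^ (1 - θ - 1 + θ) :=
            (Real.rpow_add hWx _ _).symm
          have h2 : W x ^ (1 - θ - 1 + θ) = 1 := by
            rw [show (1 - θ - 1 + θ : ℝ) = 0 by ring, Real.rpow_zero]
          nlinarith [this, h2]
        linarith [key, heq ▸ key]
    have hle : G T ≤ G 0 := antiG (Set.left_mem_Icc.2 hT0) (Set.right_mem_Icc.2 hT0) hT0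
    have hGT : G T = W T ^ (1 - θ) + c * (1 - θ) * T := rfl
    have hG0 : G 0 = W 0 ^ (1 - θ) := by simp [hGdef]
    have hcT : c * (1 - θ) * T = W 0 ^ (1 - θ) := by
      rw [hTdef]; field_simp [show (1:ℝ) - θ ≠ 0 by linarith]
    have : W T ^ (1 - θ) ≤ 0 := by
      rw [hGT, hG0, ← hcT] at hle; linarith
    exact absurd this (not_le.2 (Real.rpow_pos_of_pos hpos _))
  refine ⟨T, hT0, fun t ht => ?_⟩
  have h1 : W t ≤ W T := anti (Set.mem_Ici.2 hT0) (Set.mem_Ici.2 (hT0.trans ht)) ht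
  have h2 : 0 ≤ W t := hWnn t (hT0.trans ht)
  linarith [hWT ▸ h1]
lemma aux_young {k₁ k₂ p α₂ : ℝ} (hk₁ : 0 < k₁) (hk₂ : 0 < k₂) (hp : 1 < p)
    (hα : 0 < α₂) (hconj : 1/p + α₂/2 = 1) :
    ∃ k₄ : ℝ, 0 < k₄ ∧ ∀ a b : ℝ, 0 ≤ a → 0 ≤ b →
      k₂ * (a * b ^ α₂) ≤ k₁ / 2 * a ^ p + k₄ * b ^ 2 := by
  have hp0 : (0:ℝ) < p := by linarith
  set q : ℝ := 2 / α₂ with hq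
  have hq0 : 0 < q := by positivity
  have hcj : Real.HolderConjugate p q := by
    rw [Real.holderConjugate_iff]
    constructor
    · exact hp
    · rw [inv_eq_one_div, inv_eq_one_div, hq]
      rw [show (1:ℝ) / (2 / α₂) = α₂ / 2 by field_simp]
      exact hconj
  set μ : ℝ := (k₁ * p / (2 * k₂)) ^ (1/p) with hμ
  have hμ0 : 0 < μ := by
    apply Real.rpow_pos_of_pos; positivity
  have hμp : μ ^ p = k₁ * p / (2 * k₂) := by
    rw [hμ, ← Real.rpow_mul (by positivity)]
    rw [show 1/p * p = 1 by field_simp, Real.rpow_one]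
  refine ⟨k₂ / (μ ^ q * q), by positivity, fun a b ha hb => ?_⟩
  have hy := Real.young_inequality (μ * a) (b ^ α₂ / μ) hcj
  have h1 : μ * a * (b ^ α₂ / μ) = a * b ^ α₂ := by field_simp
  have h2 : |μ * a| ^ p = μ ^ p * a ^ p := by
    rw [abs_of_nonneg (by positivity), Real.mul_rpow hμ0.le ha]
  have h3 : |b ^ α₂ / μ| ^ q = b ^ (2:ℝ) / μ ^ q := by
    rw [abs_of_nonneg (by positivity), Real.div_rpow (by positivity) hμ0.le,
      ← Real.rpow_mul hb, show α₂ * q = 2 by rw [hq]; field_simp]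
  rw [h1, h2, h3, hμp] at hy
  rw [show b ^ (2:ℝ) = b ^ 2 from by
    rw [show (2:ℝ) = ((2:ℕ):ℝ) by norm_num, Real.rpow_natCast]] at hy
  have := mul_le_mul_of_nonneg_left hy hk₂.le
  calc k₂ * (a * b ^ α₂) ≤ k₂ * (k₁ * p / (2 * k₂) * a ^ p / p + b ^ 2 / μ ^ q / q) := this
    _ = k₁ / 2 * a ^ p + k₂ / (μ ^ q * q) * b ^ 2 := by field_simp
set_option maxHeartbeats 2000000 in
/-- Finite-time stability of the double integrator under the
sig-function feedback ṙ = v, v̇ = −k₂ sig^{α₂}(v) − k₁ sig^{α₁}(r) with k₁, k₂ > 0,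
α₂ ∈ (0,1), α₁ = α₂/(2−α₂): every trajectory reaches the origin in finite time and
stays there. -/
theorem stmt_12 (k₁ k₂ α₁ α₂ : ℝ) (hk₁ : 0 < k₁) (hk₂ : 0 < k₂)
    (hα₂ : α₂ ∈ Set.Ioo (0 : ℝ) 1) (hα₁ : α₁ = α₂ / (2 - α₂))
    (sig : ℝ → EuclideanSpace ℝ (Fin 2) → EuclideanSpace ℝ (Fin 2))
    (hsig : ∀ (α : ℝ) (y : EuclideanSpace ℝ (Fin 2)), y ≠ 0 →
      sig α y = ‖y‖ ^ (α - 1) • y)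
    (hsig0 : ∀ α : ℝ, sig α 0 = 0)
    (r v : ℝ → EuclideanSpace ℝ (Fin 2))
    (hr : Differentiable ℝ r) (hv : Differentiable ℝ v)
    (hdr : ∀ t, 0 ≤ t → deriv r t = v t)
    (hdv : ∀ t, 0 ≤ t → deriv v t = -k₂ • sig α₂ (v t) - k₁ • sig α₁ (r t)) :
    ∃ T, 0 ≤ T ∧ ∀ t, T ≤ t → r t = 0 ∧ v t = 0 := by
  obtain ⟨hα₂0, hα₂1⟩ := hα₂
  have h2α : (0:ℝ) < 2 - α₂ := by linarith
  have hα₁0 : 0 < α₁ := by rw [hα₁]; positivity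
  have hα₁1 : α₁ < 1 := by rw [hα₁, div_lt_one h2α]; linarith
  obtain ⟨p, hpdef⟩ : ∃ p : ℝ, p = α₁ + 1 := ⟨_, rfl⟩
  have hp1 : (1:ℝ) < p := by rw [hpdef]; linarith
  have hp0 : (0:ℝ) < p := by linarith
  have hp2 : p < 2 := by rw [hpdef]; linarith
  have hpkey : p * (2 - α₂) = 2 := by
    rw [hpdef, hα₁]; field_simp; ring
  have h1p : 1/p = (2 - α₂)/2 := by
    rw [div_eq_div_iff hp0.ne' (by norm_num : (2:ℝ) ≠ 0)]
    linarith [hpkey]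
  obtain ⟨s, hsdef⟩ : ∃ s : ℝ, s = (3 - α₂)/2 := ⟨_, rfl⟩
  have hs1 : (1:ℝ) < s := by rw [hsdef]; linarith
  have hs0 : (0:ℝ) < s := by linarith
  have hs' : s - 1 = (1 - α₂)/2 := by rw [hsdef]; ring
  have hinv : 1/p + 1/2 = s := by rw [h1p, hsdef]; ring
  have hconj : 1/p + α₂/2 = 1 := by rw [h1p]; ring
  have rpow_two : ∀ x : ℝ, x ^ (2:ℝ) = x ^ 2 := fun x => by
    rw [show (2:ℝ) = ((2:ℕ):ℝ) by norm_num, Real.rpow_natCast]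
  obtain ⟨X, hXdef⟩ : ∃ X : ℝ → ℝ, X = fun u => (inner ℝ (r u) (v u) : ℝ) := ⟨_, rfl⟩
  obtain ⟨Ey, hEdef⟩ : ∃ Ey : ℝ → ℝ,
      Ey = fun u => k₁/p * ‖r u‖ ^ p + 1/2 * ‖v u‖ ^ 2 := ⟨_, rfl⟩
  have hrd : ∀ t : ℝ, HasDerivAt r (deriv r t) t := fun t => (hr t).hasDerivAt
  have hvd : ∀ t : ℝ, HasDerivAt v (deriv v t) t := fun t => (hv t).hasDerivAt
  have hv2_d : ∀ t : ℝ, HasDerivAt (fun u => ‖v u‖ ^ 2)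
      (2 * ‖v t‖ ^ ((2:ℝ)-2) * (inner ℝ (v t) (deriv v t) : ℝ)) t := by
    intro t
    have h := aux_norm_rpow_hasDerivAt one_lt_two (hvd t)
    simp only [rpow_two] at h
    exact h
  have hE_d : ∀ t : ℝ, HasDerivAt Ey
      (k₁/p * (p * ‖r t‖ ^ (p-2) * (inner ℝ (r t) (deriv r t) : ℝ))
        + 1/2 * (2 * ‖v t‖ ^ ((2:ℝ)-2) * (inner ℝ (v t) (deriv v t) : ℝ))) t := by
    intro t
    rw [hEdef]
    exact ((aux_norm_rpow_hasDerivAt hp1 (hrd t)).const_mul (k₁/p)).add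
      ((hv2_d t).const_mul (1/2))
  have hEnn : ∀ u, 0 ≤ Ey u := by
    intro u
    have h1 : (0:ℝ) ≤ ‖r u‖ ^ p := Real.rpow_nonneg (norm_nonneg _) _
    have h2 : (0:ℝ) ≤ ‖v u‖ ^ 2 := by positivity
    have h3 : (0:ℝ) ≤ k₁/p := by positivity
    simp only [hEdef]
    nlinarith [mul_nonneg h3 h1]
  have hE_deriv : ∀ t : ℝ, 0 ≤ t → HasDerivAt Ey (-k₂ * ‖v t‖ ^ (1+α₂)) t := by
    intro t ht
    have h := hE_d t
    rw [hdr t ht, hdv t ht] at h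
    have hA : (inner ℝ (v t) (sig α₂ (v t)) : ℝ) = ‖v t‖ ^ (1+α₂) := by
      rcases eq_or_ne (v t) 0 with h0 | h0
      · rw [h0, hsig0]
        simp [Real.zero_rpow (by linarith : (1:ℝ)+α₂ ≠ 0)]
      · rw [hsig _ _ h0, real_inner_smul_right, real_inner_self_eq_norm_sq,
          ← Real.rpow_natCast ‖v t‖ 2, ← Real.rpow_add (norm_pos_iff.2 h0),
          show α₂ - 1 + ((2:ℕ):ℝ) = 1 + α₂ by push_cast; ring]
    have hB : (inner ℝ (v t) (sig α₁ (r t)) : ℝ)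
        = ‖r t‖ ^ (p-2) * (inner ℝ (r t) (v t) : ℝ) := by
      rcases eq_or_ne (r t) 0 with h0 | h0
      · rw [h0, hsig0]; simp
      · rw [hsig _ _ h0, real_inner_smul_right, real_inner_comm,
          show α₁ - 1 = p - 2 by rw [hpdef]; ring]
    have hval : k₁/p * (p * ‖r t‖ ^ (p-2) * (inner ℝ (r t) (v t) : ℝ))
        + 1/2 * (2 * ‖v t‖ ^ ((2:ℝ)-2) *
          (inner ℝ (v t) (-k₂ • sig α₂ (v t) - k₁ • sig α₁ (r t)) : ℝ))
        = -k₂ * ‖v t‖ ^ (1+α₂) := by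
      rw [inner_sub_right, real_inner_smul_right, real_inner_smul_right, hA, hB,
        show (2:ℝ) - 2 = 0 by norm_num, Real.rpow_zero]
      field_simp
      ring
    rw [hval] at h
    exact h
  have hX_d : ∀ t : ℝ, 0 ≤ t → HasDerivAt X
      (‖v t‖ ^ 2 + (inner ℝ (r t) (deriv v t) : ℝ)) t := by
    intro t ht
    have h := (hrd t).inner ℝ (hvd t)
    rw [hdr t ht] at h
    have : (inner ℝ (r t) (deriv v t) : ℝ) + (inner ℝ (v t) (v t) : ℝ)
        = ‖v t‖ ^ 2 + (inner ℝ (r t) (deriv v t) : ℝ) := by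
      rw [real_inner_self_eq_norm_sq]; ring
    rw [this] at h
    rw [hXdef]
    exact h
  have hXd_le : ∀ t : ℝ, 0 ≤ t → (inner ℝ (r t) (deriv v t) : ℝ) ≤
      k₂ * (‖r t‖ * ‖v t‖ ^ α₂) - k₁ * ‖r t‖ ^ p := by
    intro t ht
    rw [hdv t ht, inner_sub_right, real_inner_smul_right, real_inner_smul_right]
    have hC : -(‖r t‖ * ‖v t‖ ^ α₂) ≤ (inner ℝ (r t) (sig α₂ (v t)) : ℝ) := by
      rcases eq_or_ne (v t) 0 with h0 | h0
      · rw [h0, hsig0]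
        simp [Real.zero_rpow hα₂0.ne']
      · rw [hsig _ _ h0, real_inner_smul_right]
        have h1 : -(‖r t‖ * ‖v t‖) ≤ (inner ℝ (r t) (v t) : ℝ) := by
          have := abs_real_inner_le_norm (r t) (v t)
          have h2 := neg_abs_le (inner ℝ (r t) (v t) : ℝ)
          linarith
        have h3 : (0:ℝ) ≤ ‖v t‖ ^ (α₂ - 1) := Real.rpow_nonneg (norm_nonneg _) _
        have h4 := mul_le_mul_of_nonneg_left h1 h3
        have h5 : ‖v t‖ ^ (α₂ - 1) * ‖v t‖ = ‖v t‖ ^ α₂ := by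
          nth_rewrite 2 [← Real.rpow_one ‖v t‖]
          rw [← Real.rpow_add (norm_pos_iff.2 h0)]
          norm_num
        calc -(‖r t‖ * ‖v t‖ ^ α₂) = ‖v t‖ ^ (α₂ - 1) * -(‖r t‖ * ‖v t‖) := by
              rw [← h5]; ring
          _ ≤ _ := h4
    have hD : (inner ℝ (r t) (sig α₁ (r t)) : ℝ) = ‖r t‖ ^ p := by
      rcases eq_or_ne (r t) 0 with h0 | h0
      · rw [h0, hsig0]
        simp [Real.zero_rpow hp0.ne']
      · rw [hsig _ _ h0, real_inner_smul_right, real_inner_self_eq_norm_sq,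
          ← Real.rpow_natCast ‖r t‖ 2, ← Real.rpow_add (norm_pos_iff.2 h0),
          show α₁ - 1 + ((2:ℕ):ℝ) = p by rw [hpdef]; push_cast; ring]
    rw [hD]
    nlinarith [hC, hk₂.le]
  -- basic bounds
  have hEa : ∀ u : ℝ, k₁/p * ‖r u‖ ^ p ≤ Ey u := by
    intro u
    have h2 : (0:ℝ) ≤ ‖v u‖ ^ 2 := by positivity
    simp only [hEdef]
    linarith
  have hEb : ∀ u : ℝ, 1/2 * ‖v u‖ ^ 2 ≤ Ey u := by
    intro u
    have h1 : (0:ℝ) ≤ ‖r u‖ ^ p := Real.rpow_nonneg (norm_nonneg _) _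
    have h3 : (0:ℝ) ≤ k₁/p := by positivity
    simp only [hEdef]
    nlinarith [mul_nonneg h3 h1]
  have hb_le : ∀ u : ℝ, ‖v u‖ ≤ (2 * Ey u) ^ ((1:ℝ)/2) := by
    intro u
    have h2 : ‖v u‖ ^ (2:ℝ) ≤ 2 * Ey u := by rw [rpow_two]; linarith [hEb u]
    have h1 : (‖v u‖ ^ (2:ℝ)) ^ ((1:ℝ)/2) ≤ (2 * Ey u) ^ ((1:ℝ)/2) :=
      Real.rpow_le_rpow (by positivity) h2 (by norm_num)
    rwa [← Real.rpow_mul (norm_nonneg _), show (2:ℝ) * (1/2) = 1 by norm_num,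
      Real.rpow_one] at h1
  have ha_le : ∀ u : ℝ, ‖r u‖ ≤ (p/k₁ * Ey u) ^ ((1:ℝ)/p) := by
    intro u
    have h2 : ‖r u‖ ^ p ≤ p/k₁ * Ey u := by
      have := hEa u
      calc ‖r u‖ ^ p = p/k₁ * (k₁/p * ‖r u‖ ^ p) := by field_simp
        _ ≤ p/k₁ * Ey u := by
            apply mul_le_mul_of_nonneg_left (hEa u) (by positivity)
    have h1 : (‖r u‖ ^ p) ^ ((1:ℝ)/p) ≤ (p/k₁ * Ey u) ^ ((1:ℝ)/p) :=
      Real.rpow_le_rpow (by positivity) h2 (by positivity)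
    rwa [← Real.rpow_mul (norm_nonneg _), show p * (1/p) = 1 by field_simp,
      Real.rpow_one] at h1
  obtain ⟨C₁, hC₁def⟩ : ∃ C₁ : ℝ, C₁ = (p/k₁) ^ ((1:ℝ)/p) * 2 ^ ((1:ℝ)/2) := ⟨_, rfl⟩
  have hC₁0 : 0 < C₁ := by
    rw [hC₁def]
    have := Real.rpow_pos_of_pos (show (0:ℝ) < p/k₁ by positivity) ((1:ℝ)/p)
    have := Real.rpow_pos_of_pos (show (0:ℝ) < 2 by norm_num) ((1:ℝ)/2)
    positivity
  have hXb : ∀ u : ℝ, |X u| ≤ C₁ * Ey u ^ s := by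
    intro u
    have h1 : |X u| ≤ ‖r u‖ * ‖v u‖ := by
      rw [hXdef]; exact abs_real_inner_le_norm _ _
    have h2 : ‖r u‖ * ‖v u‖ ≤ (p/k₁ * Ey u) ^ ((1:ℝ)/p) * (2 * Ey u) ^ ((1:ℝ)/2) := by
      apply mul_le_mul (ha_le u) (hb_le u) (norm_nonneg _)
        (Real.rpow_nonneg (mul_nonneg (by positivity) (hEnn u)) _)
    have h3 : (p/k₁ * Ey u) ^ ((1:ℝ)/p) * (2 * Ey u) ^ ((1:ℝ)/2) = C₁ * Ey u ^ s := by
      rw [Real.mul_rpow (by positivity) (hEnn u), Real.mul_rpow (by norm_num) (hEnn u),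
        hC₁def]
      rw [show (p/k₁) ^ ((1:ℝ)/p) * Ey u ^ ((1:ℝ)/p) * ((2:ℝ) ^ ((1:ℝ)/2) * Ey u ^ ((1:ℝ)/2))
          = (p/k₁) ^ ((1:ℝ)/p) * 2 ^ ((1:ℝ)/2) * (Ey u ^ ((1:ℝ)/p) * Ey u ^ ((1:ℝ)/2)) by ring,
        ← Real.rpow_add' (hEnn u) (by rw [hinv]; linarith), hinv]
    linarith [h1, h3 ▸ h2]
  have hb2G : ∀ u : ℝ, (‖v u‖:ℝ) ^ 2 ≤ 2 ^ (s-1) * (Ey u ^ (s-1) * ‖v u‖ ^ (1+α₂)) := by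
    intro u
    have hsplit : (‖v u‖:ℝ) ^ 2 = ‖v u‖ ^ (1+α₂) * ‖v u‖ ^ (1-α₂) := by
      rw [← Real.rpow_add' (norm_nonneg _) (by norm_num : (1+α₂) + (1-α₂) ≠ 0)]
      rw [show (1+α₂) + (1-α₂) = (2:ℝ) by ring, rpow_two]
    have h1 : ‖v u‖ ^ (1-α₂) ≤ (2 * Ey u) ^ ((1:ℝ)/2 * (1-α₂)) := by
      rw [Real.rpow_mul (mul_nonneg (by norm_num) (hEnn u))]
      exact Real.rpow_le_rpow (norm_nonneg _) (hb_le u) (by linarith)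
    have h2 : (2 * Ey u) ^ ((1:ℝ)/2 * (1-α₂)) = 2 ^ (s-1) * Ey u ^ (s-1) := by
      rw [show (1:ℝ)/2 * (1-α₂) = s - 1 by rw [hs']; ring,
        Real.mul_rpow (by norm_num) (hEnn u)]
    have h3 : (0:ℝ) ≤ ‖v u‖ ^ (1+α₂) := Real.rpow_nonneg (norm_nonneg _) _
    calc (‖v u‖:ℝ) ^ 2 = ‖v u‖ ^ (1+α₂) * ‖v u‖ ^ (1-α₂) := hsplit
      _ ≤ ‖v u‖ ^ (1+α₂) * (2 ^ (s-1) * Ey u ^ (s-1)) := by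
          apply mul_le_mul_of_nonneg_left _ h3
          rw [← h2]; exact h1
      _ = 2 ^ (s-1) * (Ey u ^ (s-1) * ‖v u‖ ^ (1+α₂)) := by ring
  obtain ⟨C₀, hC₀def⟩ : ∃ C₀ : ℝ, C₀ = k₁/p + 2 ^ (s-1) := ⟨_, rfl⟩
  have h2s1 : (0:ℝ) < 2 ^ (s-1) := Real.rpow_pos_of_pos (by norm_num) _
  have hC₀0 : 0 < C₀ := by rw [hC₀def]; positivity
  have hE_ub : ∀ u : ℝ, Ey u ≤ C₀ * (Ey u ^ (s-1) * ‖v u‖ ^ (1+α₂) + ‖r u‖ ^ p) := by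
    intro u
    have hG0 : (0:ℝ) ≤ Ey u ^ (s-1) * ‖v u‖ ^ (1+α₂) :=
      mul_nonneg (Real.rpow_nonneg (hEnn u) _) (Real.rpow_nonneg (norm_nonneg _) _)
    have hH0 : (0:ℝ) ≤ ‖r u‖ ^ p := Real.rpow_nonneg (norm_nonneg _) _
    have h1 := hb2G u
    have hkp : (0:ℝ) < k₁/p := by positivity
    have hEyu : Ey u = k₁/p * ‖r u‖ ^ p + 1/2 * ‖v u‖ ^ 2 := by simp only [hEdef]
    rw [hC₀def]
    have h4 : (1:ℝ)/2 * ‖v u‖ ^ 2 ≤ 1/2 * (2 ^ (s-1) * (Ey u ^ (s-1) * ‖v u‖ ^ (1+α₂))) := by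
      linarith
    linarith [mul_nonneg hkp.le hG0, mul_nonneg h2s1.le hH0, h4,
      mul_nonneg h2s1.le hG0, hEyu]
  obtain ⟨k₄, hk₄0, hyoung⟩ := aux_young hk₁ hk₂ hp1 hα₂0 hconj
  have h1k₄ : (0:ℝ) < 1 + k₄ := by linarith
  have h2s : (0:ℝ) < 2 ^ s := Real.rpow_pos_of_pos (by norm_num) _
  obtain ⟨ε, hεdef⟩ : ∃ ε : ℝ, ε = min (s*k₂ / (2 ^ s * (1+k₄))) (1/(2*C₁)) := ⟨_, rfl⟩
  have hε0 : 0 < ε := by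
    rw [hεdef]
    exact lt_min (by positivity) (by positivity)
  have hεC₁ : ε * C₁ ≤ 1/2 := by
    have h1 : ε ≤ 1/(2*C₁) := hεdef ▸ min_le_right _ _
    calc ε * C₁ ≤ 1/(2*C₁) * C₁ := mul_le_mul_of_nonneg_right h1 hC₁0.le
      _ = 1/2 := by field_simp
  have h2ss : (2:ℝ) ^ s = 2 * 2 ^ (s-1) := by
    have h := Real.rpow_add (show (0:ℝ) < 2 by norm_num) 1 (s-1)
    rw [show (1:ℝ) + (s-1) = s by ring, Real.rpow_one] at h
    exact h
  have hε2 : ε * ((1+k₄) * 2 ^ (s-1)) ≤ s*k₂/2 := by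
    have h1 : ε ≤ s*k₂ / (2 ^ s * (1+k₄)) := hεdef ▸ min_le_left _ _
    have h3 : (0:ℝ) ≤ (1+k₄) * 2 ^ (s-1) := by positivity
    have hne1 : (1+k₄) ≠ 0 := h1k₄.ne'
    have hne2 : ((2:ℝ) ^ (s-1)) ≠ 0 := h2s1.ne'
    calc ε * ((1+k₄) * 2 ^ (s-1))
        ≤ s*k₂ / (2 ^ s * (1+k₄)) * ((1+k₄) * 2 ^ (s-1)) :=
          mul_le_mul_of_nonneg_right h1 h3
      _ = s*k₂/2 := by rw [h2ss]; field_simp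
  obtain ⟨W, hWdef⟩ : ∃ W : ℝ → ℝ, W = fun u => Ey u ^ s + ε * X u := ⟨_, rfl⟩
  have hWeq : ∀ u : ℝ, W u = Ey u ^ s + ε * X u := by intro u; rw [hWdef]
  have hW_lb : ∀ u : ℝ, 1/2 * Ey u ^ s ≤ W u := by
    intro u
    have h2 : ε * |X u| ≤ ε * (C₁ * Ey u ^ s) :=
      mul_le_mul_of_nonneg_left (hXb u) hε0.le
    have h3 : ε * C₁ * Ey u ^ s ≤ 1/2 * Ey u ^ s :=
      mul_le_mul_of_nonneg_right hεC₁ (Real.rpow_nonneg (hEnn u) _)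
    have h5 := mul_le_mul_of_nonneg_left (neg_abs_le (X u)) hε0.le
    rw [hWeq u]
    linarith
  have hW_ub : ∀ u : ℝ, W u ≤ 3/2 * Ey u ^ s := by
    intro u
    have h2 : ε * |X u| ≤ ε * (C₁ * Ey u ^ s) :=
      mul_le_mul_of_nonneg_left (hXb u) hε0.le
    have h3 : ε * C₁ * Ey u ^ s ≤ 1/2 * Ey u ^ s :=
      mul_le_mul_of_nonneg_right hεC₁ (Real.rpow_nonneg (hEnn u) _)
    have h5 := mul_le_mul_of_nonneg_left (le_abs_self (X u)) hε0.le
    rw [hWeq u]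
    linarith
  have hWnn : ∀ u : ℝ, 0 ≤ W u := by
    intro u
    have := Real.rpow_nonneg (hEnn u) s
    linarith [hW_lb u]
  have hXdiff : Differentiable ℝ X := by
    rw [hXdef]
    exact fun t => ((hrd t).inner ℝ (hvd t)).differentiableAt
  have hWdiff : Differentiable ℝ W := by
    rw [hWdef]
    exact fun t => ((aux_rpow_nonneg_hasDerivAt hs1 (hE_d t) hEnn).differentiableAt).add
      ((hXdiff t).const_mul ε)
  obtain ⟨c₄, hc₄def⟩ : ∃ c₄ : ℝ, c₄ = min (s*k₂/2) (ε*k₁/2) / C₀ := ⟨_, rfl⟩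
  have hc₃0 : 0 < min (s*k₂/2) (ε*k₁/2) := lt_min (by positivity) (by positivity)
  have hc₄0 : 0 < c₄ := by rw [hc₄def]; positivity
  have hc₄C₀ : c₄ * C₀ = min (s*k₂/2) (ε*k₁/2) := by
    rw [hc₄def]; field_simp
  obtain ⟨c₂, hc₂def⟩ : ∃ c₂ : ℝ, c₂ = c₄ * (2/3) ^ ((1:ℝ)/s) := ⟨_, rfl⟩
  have h23 : (0:ℝ) < (2/3) ^ ((1:ℝ)/s) := Real.rpow_pos_of_pos (by norm_num) _
  have hc₂0 : 0 < c₂ := by rw [hc₂def]; positivity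
  have hW' : ∀ t : ℝ, 0 < t → deriv W t ≤ -c₂ * W t ^ ((1:ℝ)/s) := by
    intro t ht
    have ht0 : (0:ℝ) ≤ t := ht.le
    have hWd : HasDerivAt W (s * Ey t ^ (s-1) * (-k₂ * ‖v t‖ ^ (1+α₂))
        + ε * (‖v t‖ ^ 2 + (inner ℝ (r t) (deriv v t) : ℝ))) t := by
      rw [hWdef]
      exact (aux_rpow_nonneg_hasDerivAt hs1 (hE_deriv t ht0) hEnn).add
        ((hX_d t ht0).const_mul ε)
    rw [hWd.deriv, hc₂def]
    have hG0 : (0:ℝ) ≤ Ey t ^ (s-1) * ‖v t‖ ^ (1+α₂) :=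
      mul_nonneg (Real.rpow_nonneg (hEnn t) _) (Real.rpow_nonneg (norm_nonneg _) _)
    have hH0 : (0:ℝ) ≤ ‖r t‖ ^ p := Real.rpow_nonneg (norm_nonneg _) _
    have e1 := mul_le_mul_of_nonneg_left (hXd_le t ht0) hε0.le
    have e2 := mul_le_mul_of_nonneg_left
      (hyoung (‖r t‖) (‖v t‖) (norm_nonneg _) (norm_nonneg _)) hε0.le
    have e3 := mul_le_mul_of_nonneg_left (hb2G t)
      (by positivity : (0:ℝ) ≤ ε * (1+k₄))
    have e4 := mul_le_mul_of_nonneg_right hε2 hG0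
    have e5 := mul_le_mul_of_nonneg_right (min_le_left (s*k₂/2) (ε*k₁/2)) hG0
    have e6 := mul_le_mul_of_nonneg_right (min_le_right (s*k₂/2) (ε*k₁/2)) hH0
    have e7 : c₄ * Ey t ≤ min (s*k₂/2) (ε*k₁/2) *
        (Ey t ^ (s-1) * ‖v t‖ ^ (1+α₂) + ‖r t‖ ^ p) := by
      calc c₄ * Ey t ≤ c₄ * (C₀ * (Ey t ^ (s-1) * ‖v t‖ ^ (1+α₂) + ‖r t‖ ^ p)) :=
            mul_le_mul_of_nonneg_left (hE_ub t) hc₄0.le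
        _ = min (s*k₂/2) (ε*k₁/2) * (Ey t ^ (s-1) * ‖v t‖ ^ (1+α₂) + ‖r t‖ ^ p) := by
            rw [← hc₄C₀]; ring
    have hE_ge : (2/3) ^ ((1:ℝ)/s) * W t ^ ((1:ℝ)/s) ≤ Ey t := by
      have h6 : (2/3 * W t) ^ ((1:ℝ)/s) ≤ (Ey t ^ s) ^ ((1:ℝ)/s) := by
        apply Real.rpow_le_rpow (mul_nonneg (by norm_num) (hWnn t))
          (by linarith [hW_ub t]) (by positivity)
      rw [← Real.rpow_mul (hEnn t), show s * ((1:ℝ)/s) = 1 by field_simp,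
        Real.rpow_one, Real.mul_rpow (by norm_num) (hWnn t)] at h6
      exact h6
    have e8 := mul_le_mul_of_nonneg_left hE_ge hc₄0.le
    linarith [e1, e2, e3, e4, e5, e6, e7, e8]
  obtain ⟨T, hT0, hT⟩ := aux_finite_time hc₂0 (by positivity)
    ((div_lt_one hs0).2 hs1) hWdiff (fun t _ => hWnn t) hW'
  refine ⟨T, hT0, fun t ht => ?_⟩
  have hWt : W t = 0 := hT t ht
  have hEs : Ey t ^ s ≤ 0 := by
    have := hW_lb t
    rw [hWt] at this
    linarith
  have hE0 : Ey t = 0 := by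
    rcases (hEnn t).lt_or_eq with h | h
    · exfalso
      have := Real.rpow_pos_of_pos h s
      linarith
    · exact h.symm
  have hEyu : k₁/p * ‖r t‖ ^ p + 1/2 * ‖v t‖ ^ 2 = 0 := by
    rw [← hE0]; simp only [hEdef]
  have h1 : (0:ℝ) ≤ ‖r t‖ ^ p := Real.rpow_nonneg (norm_nonneg _) _
  have h2 : (0:ℝ) ≤ ‖v t‖ ^ 2 := by positivity
  have hkp : (0:ℝ) < k₁/p := by positivity
  have hap : ‖r t‖ ^ p = 0 := by
    by_contra h
    have h5 : 0 < ‖r t‖ ^ p := lt_of_le_of_ne h1 (Ne.symm h)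
    have h6 : 0 < k₁/p * ‖r t‖ ^ p := mul_pos hkp h5
    linarith
  have hb2 : ‖v t‖ ^ 2 = 0 := by
    have h6 : 0 ≤ k₁/p * ‖r t‖ ^ p := mul_nonneg hkp.le h1
    linarith
  constructor
  · by_contra h
    have h3 : 0 < ‖r t‖ := norm_pos_iff.2 h
    have := Real.rpow_pos_of_pos h3 p
    linarith
  · have h4 : ‖v t‖ = 0 := by
      by_contra h
      have h3 : 0 < ‖v t‖ := lt_of_le_of_ne (norm_nonneg _) (Ne.symm h)
      have : 0 < ‖v t‖ ^ 2 := by positivity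
      linarith
    exact norm_eq_zero.1 h4
end

section
/- Let k₁, C_d, u_m > 0 and define the saturation σ(u) = u if ‖u‖ ≤ u_m and σ(u) = u_m·u/‖u‖ otherwise, and the function V(r̄, v) = k₁‖r̄‖²/2 + ‖v‖²/2 if ‖r̄‖ < u_m/k₁, V(r̄, v) = u_m‖r̄‖ + ‖v‖²/2 − u_m²/(2k₁) otherwise. Then for every pair of differentiable functions r̄, v : ℝ≥0 → ℝ² satisfying ṙ̄(t) = v(t) and v̇(t) = σ(−k₁ r̄(t)) − C_d v(t), the function t ↦ V(r̄(t), v(t)) is differentiable with derivative equal to −C_d‖v(t)‖² for all t ≥ 0; in particular V is non-increasing along trajectories. -/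
open RealInnerProductSpace
set_option maxHeartbeats 800000

lemma maxsq_deriv (x : ℝ) : HasDerivAt (fun y : ℝ => max y 0 ^ 2) (2 * max x 0) x := by
  rcases lt_trichotomy x 0 with h | h | h
  · have he : (fun y : ℝ => max y 0 ^ 2) =ᶠ[nhds x] fun _ => (0:ℝ) := by
      filter_upwards [eventually_lt_nhds h] with y hy
      simp [max_eq_right hy.le]
    rw [max_eq_right h.le]
    simpa using (hasDerivAt_const x (0:ℝ)).congr_of_eventuallyEq he
  · subst h
    simp only [max_self, mul_zero]
    rw [hasDerivAt_iff_isLittleO, Asymptotics.isLittleO_iff]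
    intro c hc
    filter_upwards [Metric.ball_mem_nhds (0:ℝ) hc] with y hy
    simp only [Metric.mem_ball, Real.dist_eq, sub_zero] at hy
    have h1 : max y 0 ≤ |y| := by
      rcases le_or_gt y 0 with h' | h'
      · simp [max_eq_right h', abs_nonneg]
      · simp [max_eq_left h'.le, le_abs_self]
    have h2 : (0:ℝ) ≤ max y 0 := le_max_right _ _
    have hym : max (0:ℝ) 0 = 0 := max_self 0
    simp only [sub_zero, smul_eq_mul, mul_zero, hym, zero_pow, Real.norm_eq_abs]
    rw [show max y 0 ^ 2 - 0 ^ 2 = max y 0 ^ 2 by ring]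
    rw [abs_of_nonneg (by positivity)]
    calc max y 0 ^ 2 ≤ |y| ^ 2 := by nlinarith
      _ = |y| * |y| := by ring
      _ ≤ c * |y| := by nlinarith [abs_nonneg y]
  · have he : (fun y : ℝ => max y 0 ^ 2) =ᶠ[nhds x] fun y => y ^ 2 := by
      filter_upwards [eventually_gt_nhds h] with y hy
      simp [max_eq_left hy.le]
    rw [max_eq_left h.le]
    have hd : HasDerivAt (fun y : ℝ => y ^ 2) (2 * x) x := by
      simpa [mul_comm] using (hasDerivAt_pow 2 x)
    exact hd.congr_of_eventuallyEq he

/-- Along trajectories of ṙ̄ = v, v̇ = σ(−k₁ r̄) − C_d v with the saturated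
control, the Lyapunov function V has time derivative −C_d‖v(t)‖²; in particular V is
non-increasing along trajectories. -/
theorem stmt_14 (k₁ Cd um : ℝ) (hk₁ : 0 < k₁) (hCd : 0 < Cd) (hum : 0 < um)
    (sat : EuclideanSpace ℝ (Fin 2) → EuclideanSpace ℝ (Fin 2))
    (hsat : ∀ u, sat u = if ‖u‖ ≤ um then u else (um / ‖u‖) • u)
    (V : EuclideanSpace ℝ (Fin 2) × EuclideanSpace ℝ (Fin 2) → ℝ)
    (hV : ∀ p, V p =
      if ‖p.1‖ < um / k₁ then k₁ * ‖p.1‖ ^ 2 / 2 + ‖p.2‖ ^ 2 / 2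
      else um * ‖p.1‖ + ‖p.2‖ ^ 2 / 2 - um ^ 2 / (2 * k₁))
    (rb v : ℝ → EuclideanSpace ℝ (Fin 2))
    (hrb : Differentiable ℝ rb) (hv : Differentiable ℝ v)
    (hdr : ∀ t, 0 ≤ t → deriv rb t = v t)
    (hdv : ∀ t, 0 ≤ t → deriv v t = sat (-(k₁ • rb t)) - Cd • v t) :
    (∀ t, 0 ≤ t → HasDerivAt (fun s => V (rb s, v s)) (-Cd * ‖v t‖ ^ 2) t) ∧
    AntitoneOn (fun t => V (rb t, v t)) (Set.Ici 0) := by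
  have hVfun : (fun s => V (rb s, v s)) =
      fun s => k₁ * ‖rb s‖ ^ 2 / 2 - max (k₁ * ‖rb s‖ - um) 0 ^ 2 / (2 * k₁)
        + ‖v s‖ ^ 2 / 2 := by
    funext s
    rw [hV]
    by_cases h : ‖rb s‖ < um / k₁
    · rw [if_pos h]
      have h1 : k₁ * ‖rb s‖ - um ≤ 0 := by
        rw [lt_div_iff₀ hk₁] at h; nlinarith
      rw [max_eq_right h1]
      ring
    · rw [if_neg h]
      push_neg at h
      have h1 : 0 ≤ k₁ * ‖rb s‖ - um := by
        rw [div_le_iff₀ hk₁] at h; nlinarith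
      rw [max_eq_left h1]
      field_simp
      ring
  have key : ∀ t, 0 ≤ t → HasDerivAt (fun s => V (rb s, v s)) (-Cd * ‖v t‖ ^ 2) t := by
    intro t ht
    have hr : HasDerivAt rb (v t) t := hdr t ht ▸ (hrb t).hasDerivAt
    have hv' : HasDerivAt v (sat (-(k₁ • rb t)) - Cd • v t) t :=
      hdv t ht ▸ (hv t).hasDerivAt
    -- derivative of ⟪rb, rb⟫
    have hsq : HasDerivAt (fun s => ⟪rb s, rb s⟫) (⟪rb t, v t⟫ + ⟪v t, rb t⟫) t :=
      hr.inner ℝ hr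
    have hA : HasDerivAt (fun s => k₁ * ‖rb s‖ ^ 2 / 2) (k₁ * ⟪rb t, v t⟫) t := by
      have hfe : (fun s => k₁ * ‖rb s‖ ^ 2 / 2) = fun s => k₁ / 2 * ⟪rb s, rb s⟫ := by
        funext s; rw [real_inner_self_eq_norm_sq]; ring
      rw [hfe]
      have h2 := hsq.const_mul (k₁ / 2)
      refine h2.congr_deriv ?_
      rw [real_inner_comm (v t)]; ring
    have hC : HasDerivAt (fun s => ‖v s‖ ^ 2 / 2)
        (⟪v t, sat (-(k₁ • rb t))⟫ - Cd * ‖v t‖ ^ 2) t := by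
      have hfe : (fun s => ‖v s‖ ^ 2 / 2) = fun s => 1 / 2 * ⟪v s, v s⟫ := by
        funext s; rw [real_inner_self_eq_norm_sq]; ring
      rw [hfe]
      have h2 := (hv'.inner ℝ hv').const_mul (1 / 2 : ℝ)
      refine h2.congr_deriv ?_
      rw [inner_sub_right, inner_sub_left, real_inner_smul_right, real_inner_smul_left,
        real_inner_comm (sat (-(k₁ • rb t))) (v t), real_inner_self_eq_norm_sq]
      ring
    have hnorm_sat : ‖-(k₁ • rb t)‖ = k₁ * ‖rb t‖ := by
      rw [norm_neg, norm_smul, Real.norm_eq_abs, abs_of_pos hk₁]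
    rw [hVfun]
    by_cases hlt : k₁ * ‖rb t‖ < um
    · -- small region: max term locally zero, sat is identity
      have hM : HasDerivAt (fun s => max (k₁ * ‖rb s‖ - um) 0 ^ 2 / (2 * k₁)) 0 t := by
        have hcont : Continuous fun s => k₁ * ‖rb s‖ := continuous_const.mul hrb.continuous.norm
        have hev : ∀ᶠ s in nhds t, k₁ * ‖rb s‖ < um :=
          (hcont.continuousAt).eventually_lt continuousAt_const hlt
        have he : (fun s => max (k₁ * ‖rb s‖ - um) 0 ^ 2 / (2 * k₁)) =ᶠ[nhds t]
            fun _ => (0:ℝ) := by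
          filter_upwards [hev] with s hs
          rw [max_eq_right (by linarith)]
          simp
        simpa using (hasDerivAt_const t (0:ℝ)).congr_of_eventuallyEq he
      have hsatv : sat (-(k₁ • rb t)) = -(k₁ • rb t) := by
        rw [hsat, if_pos (by rw [hnorm_sat]; linarith)]
      have htot := (hA.sub hM).add hC
      refine htot.congr_deriv ?_
      rw [hsatv, inner_neg_right, real_inner_smul_right, real_inner_comm (v t)]
      ring
    · -- large region
      push_neg at hlt
      have hrne : rb t ≠ 0 := by
        intro h0
        rw [h0, norm_zero, mul_zero] at hlt
        linarith
      have hi : ⟪rb t, rb t⟫ ≠ (0:ℝ) := by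
        rw [real_inner_self_eq_norm_sq]
        exact pow_ne_zero 2 (norm_ne_zero_iff.mpr hrne)
      have hrpos : 0 < ‖rb t‖ := norm_pos_iff.mpr hrne
      have hN : HasDerivAt (fun s => ‖rb s‖) (⟪rb t, v t⟫ / ‖rb t‖) t := by
        have h1 := (Real.hasDerivAt_sqrt hi).comp t hsq
        simp only [Function.comp_def] at h1
        have hfe : (fun s => Real.sqrt ⟪rb s, rb s⟫) = fun s => ‖rb s‖ := by
          funext s; rw [real_inner_self_eq_norm_sq, Real.sqrt_sq (norm_nonneg _)]
        rw [hfe] at h1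
        refine h1.congr_deriv ?_
        rw [real_inner_comm (v t), real_inner_self_eq_norm_sq,
          Real.sqrt_sq (norm_nonneg _)]
        field_simp
        ring
      have hf : HasDerivAt (fun s => k₁ * ‖rb s‖ - um)
          (k₁ * (⟪rb t, v t⟫ / ‖rb t‖)) t := (hN.const_mul k₁).sub_const um
      have hM : HasDerivAt (fun s => max (k₁ * ‖rb s‖ - um) 0 ^ 2 / (2 * k₁))
          (2 * max (k₁ * ‖rb t‖ - um) 0 * (k₁ * (⟪rb t, v t⟫ / ‖rb t‖)) / (2 * k₁)) t := by
        have hq := (maxsq_deriv (k₁ * ‖rb t‖ - um)).comp t hf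
        simp only [Function.comp_def] at hq
        exact hq.div_const (2 * k₁)
      have htot := (hA.sub hM).add hC
      refine htot.congr_deriv ?_
      rw [max_eq_left (by linarith)]
      by_cases heq : k₁ * ‖rb t‖ ≤ um
      · -- boundary: k₁‖r‖ = um
        have heq' : k₁ * ‖rb t‖ = um := le_antisymm heq hlt
        have hsatv : sat (-(k₁ • rb t)) = -(k₁ • rb t) := by
          rw [hsat, if_pos (by rw [hnorm_sat]; linarith)]
        rw [hsatv, inner_neg_right, real_inner_smul_right, real_inner_comm (v t)]
        rw [show k₁ * ‖rb t‖ - um = 0 by linarith]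
        ring
      · push_neg at heq
        have hsatv : sat (-(k₁ • rb t)) = (um / (k₁ * ‖rb t‖)) • (-(k₁ • rb t)) := by
          rw [hsat, if_neg (by rw [hnorm_sat]; linarith), hnorm_sat]
        rw [hsatv, real_inner_smul_right, inner_neg_right, real_inner_smul_right,
          real_inner_comm (v t)]
        field_simp
        ring
  refine ⟨key, ?_⟩
  apply antitoneOn_of_deriv_nonpos (convex_Ici 0)
  · intro s hs
    exact ((key s hs).continuousAt).continuousWithinAt
  · intro s hs
    rw [interior_Ici] at hs
    exact ((key s (le_of_lt hs)).differentiableAt).differentiableWithinAt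
  · intro s hs
    rw [interior_Ici] at hs
    rw [(key s (le_of_lt hs)).deriv]
    nlinarith [sq_nonneg ‖v s‖]
end

section
/- Let k₁, C_d, u_m > 0 and define the saturation σ(u) = u if ‖u‖ ≤ u_m and σ(u) = u_m·u/‖u‖ otherwise. Then for every pair of differentiable functions r̄, v : ℝ≥0 → ℝ² satisfying ṙ̄(t) = v(t) and v̇(t) = σ(−k₁ r̄(t)) − C_d v(t) for all t ≥ 0, one has r̄(t) → 0 and v(t) → 0 as t → ∞; i.e., the center of the formation asymptotically converges to the safe-area center with zero velocity. -/
open Filter intervalIntegral Set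
open scoped RealInnerProductSpace


open Filter intervalIntegral Set

/-- Barbalat-type lemma: if `f` has derivative `g` on `[0,∞)`, `g` is Lipschitz there,
and `f` converges at infinity, then `g → 0`. -/
lemma barbalat {H : Type*} [NormedAddCommGroup H] [NormedSpace ℝ H] [CompleteSpace H]
    (f g : ℝ → H) (K : ℝ) (hK : 0 ≤ K)
    (hderiv : ∀ t, 0 ≤ t → HasDerivAt f (g t) t)
    (hlip : ∀ s t, 0 ≤ s → 0 ≤ t → ‖g s - g t‖ ≤ K * |s - t|)
    (L : H) (hconv : Tendsto f atTop (nhds L)) :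
    Tendsto g atTop (nhds 0) := by
  rw [NormedAddCommGroup.tendsto_nhds_zero]
  intro ε hε
  set δ : ℝ := ε / (2 * (K + 1)) with hδdef
  have hδ : 0 < δ := by positivity
  -- continuity of g on Ici 0
  have hgcont : ContinuousOn g (Ici 0) := by
    have : LipschitzOnWith (Real.toNNReal K) g (Ici 0) := by
      apply LipschitzOnWith.of_dist_le_mul
      intro x hx y hy
      rw [dist_eq_norm, Real.dist_eq]
      simpa [Real.coe_toNNReal K hK] using hlip x y hx hy
    exact this.continuousOn
  obtain ⟨T, hT⟩ := (Metric.tendsto_atTop.1 hconv) (δ * ε / 4) (by positivity)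
  rw [eventually_atTop]
  refine ⟨max T 0, fun t ht => ?_⟩
  have ht0 : (0:ℝ) ≤ t := le_trans (le_max_right _ _) ht
  have htT : T ≤ t := le_trans (le_max_left _ _) ht
  by_contra hcon
  push_neg at hcon
  -- FTC on [t, t+δ]
  have hsub : uIcc t (t + δ) ⊆ Ici 0 := by
    rw [uIcc_of_le (by linarith)]
    exact fun x hx => le_trans ht0 hx.1
  have hint : IntervalIntegrable g MeasureTheory.volume t (t + δ) :=
    (hgcont.mono hsub).intervalIntegrable
  have hftc : ∫ s in t..(t + δ), g s = f (t + δ) - f t :=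
    integral_eq_sub_of_hasDerivAt (fun x hx => hderiv x (hsub hx)) hint
  have hintc : IntervalIntegrable (fun _ : ℝ => g t) MeasureTheory.volume t (t + δ) :=
    intervalIntegrable_const
  have hsplit : (∫ s in t..(t + δ), (g s - g t)) = (f (t + δ) - f t) - δ • g t := by
    rw [intervalIntegral.integral_sub hint hintc, hftc, intervalIntegral.integral_const]
    ring_nf
  have hboundint : ‖∫ s in t..(t + δ), (g s - g t)‖ ≤ (K * δ) * |(t + δ) - t| := by
    apply intervalIntegral.norm_integral_le_of_norm_le_const
    intro x hx
    rw [uIoc_of_le (by linarith)] at hx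
    have hx0 : (0:ℝ) ≤ x := le_trans ht0 (le_of_lt hx.1)
    calc ‖g x - g t‖ ≤ K * |x - t| := hlip x t hx0 ht0
      _ ≤ K * δ := by
          apply mul_le_mul_of_nonneg_left _ hK
          rw [abs_of_nonneg (by linarith [hx.1.le])]
          linarith [hx.2]
  have habs : |(t + δ) - t| = δ := by rw [show (t+δ)-t = δ by ring, abs_of_pos hδ]
  rw [habs] at hboundint
  have hKδ : K * δ ≤ ε / 2 := by
    have h1 : K * δ ≤ (K + 1) * δ := by nlinarith [hδ.le]
    have h2 : (K + 1) * δ = ε / 2 := by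
      rw [hδdef]
      field_simp
    linarith
  have h1 : ‖f (t + δ) - f t‖ < δ * ε / 2 := by
    calc ‖f (t + δ) - f t‖ ≤ ‖f (t+δ) - L‖ + ‖f t - L‖ := by
          rw [show f (t+δ) - f t = (f (t+δ) - L) - (f t - L) by abel]
          exact norm_sub_le _ _
      _ < δ * ε / 4 + δ * ε / 4 := by
          have := hT (t + δ) (by linarith)
          have := hT t htT
          rw [dist_eq_norm] at *
          linarith
      _ = δ * ε / 2 := by ring
  have hlow : δ * ε ≤ ‖δ • g t‖ := by
    rw [norm_smul, Real.norm_eq_abs, abs_of_pos hδ]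
    exact mul_le_mul_of_nonneg_left hcon hδ.le
  have : ‖δ • g t‖ ≤ ‖f (t + δ) - f t‖ + ‖∫ s in t..(t + δ), (g s - g t)‖ := by
    have : δ • g t = (f (t + δ) - f t) - ∫ s in t..(t + δ), (g s - g t) := by
      rw [hsplit]; abel
    rw [this]
    exact norm_sub_le _ _
  have hfin : δ * ε < δ * ε / 2 + (ε/2) * δ := by
    calc δ * ε ≤ ‖δ • g t‖ := hlow
      _ ≤ ‖f (t + δ) - f t‖ + ‖∫ s in t..(t + δ), (g s - g t)‖ := this
      _ < δ * ε / 2 + (K * δ) * δ := by linarith [hboundint]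
      _ ≤ δ * ε / 2 + (ε/2) * δ := by nlinarith
  linarith

section SatLemmas
variable {H : Type*} [NormedAddCommGroup H] [NormedSpace ℝ H]
  (um : ℝ) (hum : 0 < um) (sat : H → H)
  (hsat : ∀ u, sat u = if ‖u‖ ≤ um then u else (um / ‖u‖) • u)

include hum hsat

lemma sat_norm_le : ∀ u, ‖sat u‖ ≤ um := by
  intro u
  rw [hsat u]
  by_cases hu : ‖u‖ ≤ um
  · rwa [if_pos hu]
  · rw [if_neg hu, norm_smul, Real.norm_eq_abs]
    push_neg at hu
    have hu0 : 0 < ‖u‖ := lt_trans hum hu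
    rw [abs_of_pos (by positivity)]
    rw [div_mul_cancel₀ _ (ne_of_gt hu0)]

lemma sat_neg : ∀ u, sat (-u) = - sat u := by
  intro u
  rw [hsat u, hsat (-u), norm_neg]
  by_cases hu : ‖u‖ ≤ um
  · rw [if_pos hu, if_pos hu]
  · rw [if_neg hu, if_neg hu, smul_neg]

lemma sat_eq_of_norm_lt : ∀ u, ‖sat u‖ < um → sat u = u := by
  intro u hlt
  by_cases hu : ‖u‖ ≤ um
  · rw [hsat u, if_pos hu]
  · exfalso
    push_neg at hu
    have hu0 : 0 < ‖u‖ := lt_trans hum hu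
    rw [hsat u, if_neg (not_le.2 hu), norm_smul, Real.norm_eq_abs,
      abs_of_pos (by positivity), div_mul_cancel₀ _ (ne_of_gt hu0)] at hlt
    exact lt_irrefl um hlt

lemma sat_lipschitz : ∀ u w, ‖sat u - sat w‖ ≤ 2 * ‖u - w‖ := by
  have key : ∀ a b : H, ‖a‖ ≤ um → um < ‖b‖ → ‖sat a - sat b‖ ≤ 2 * ‖a - b‖ := by
    intro a b ha hb
    have hb0 : 0 < ‖b‖ := lt_trans hum hb
    rw [hsat a, hsat b, if_pos ha, if_neg (not_le.2 hb)]
    have h1 : ‖b - (um / ‖b‖) • b‖ = ‖b‖ - um := by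
      have : b - (um / ‖b‖) • b = (1 - um/‖b‖) • b := by
        rw [sub_smul, one_smul]
      rw [this, norm_smul, Real.norm_eq_abs]
      rw [abs_of_nonneg (by rw [sub_nonneg]; exact (div_le_one hb0).2 hb.le)]
      field_simp
    calc ‖a - (um / ‖b‖) • b‖ ≤ ‖a - b‖ + ‖b - (um / ‖b‖) • b‖ := by
          have : a - (um / ‖b‖) • b = (a - b) + (b - (um / ‖b‖) • b) := by abel
          rw [this]; exact norm_add_le _ _
      _ = ‖a - b‖ + (‖b‖ - um) := by rw [h1]
      _ ≤ ‖a - b‖ + (‖b‖ - ‖a‖) := by linarith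
      _ ≤ ‖a - b‖ + ‖a - b‖ := by
          have := norm_sub_norm_le b a
          rw [show ‖b - a‖ = ‖a - b‖ from norm_sub_rev b a] at this
          linarith
      _ = 2 * ‖a - b‖ := by ring
  intro u w
  by_cases hu : ‖u‖ ≤ um <;> by_cases hw : ‖w‖ ≤ um
  · rw [hsat u, hsat w, if_pos hu, if_pos hw]
    linarith [norm_nonneg (u - w)]
  · exact key u w hu (not_le.1 hw)
  · rw [norm_sub_rev, show ‖u - w‖ = ‖w - u‖ from norm_sub_rev u w]
    exact key w u hw (not_le.1 hu)
  · push_neg at hu hw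
    have hu0 : 0 < ‖u‖ := lt_trans hum hu
    have hw0 : 0 < ‖w‖ := lt_trans hum hw
    rw [hsat u, hsat w, if_neg (not_le.2 hu), if_neg (not_le.2 hw)]
    have hsplit : (um / ‖u‖) • u - (um / ‖w‖) • w
        = (um / ‖u‖) • (u - w) + (um / ‖u‖ - um / ‖w‖) • w := by
      rw [smul_sub, sub_smul]; abel
    rw [hsplit]
    have h1 : ‖(um / ‖u‖) • (u - w)‖ ≤ ‖u - w‖ := by
      rw [norm_smul, Real.norm_eq_abs, abs_of_pos (by positivity)]
      have : um / ‖u‖ ≤ 1 := (div_le_one hu0).2 hu.le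
      nlinarith [norm_nonneg (u - w)]
    have h2 : ‖(um / ‖u‖ - um / ‖w‖) • w‖ ≤ ‖u - w‖ := by
      rw [norm_smul, Real.norm_eq_abs]
      have heq : um / ‖u‖ - um / ‖w‖ = um * (‖w‖ - ‖u‖) / (‖u‖ * ‖w‖) := by
        field_simp
      rw [heq, abs_div, abs_mul, abs_of_pos hum, abs_of_pos (mul_pos hu0 hw0),
        div_mul_eq_mul_div, div_le_iff₀ (mul_pos hu0 hw0)]
      have hb : |‖w‖ - ‖u‖| ≤ ‖u - w‖ := by
        have := abs_norm_sub_norm_le w u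
        rwa [show ‖w - u‖ = ‖u - w‖ from norm_sub_rev w u] at this
      nlinarith [abs_nonneg (‖w‖ - ‖u‖), mul_le_mul_of_nonneg_right hb (mul_pos hu0 hw0).le,
        mul_le_mul_of_nonneg_right hu.le (mul_nonneg (abs_nonneg (‖w‖ - ‖u‖)) hw0.le)]
    calc ‖(um / ‖u‖) • (u - w) + (um / ‖u‖ - um / ‖w‖) • w‖
        ≤ ‖(um / ‖u‖) • (u - w)‖ + ‖(um / ‖u‖ - um / ‖w‖) • w‖ := norm_add_le _ _
      _ ≤ ‖u - w‖ + ‖u - w‖ := add_le_add h1 h2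
      _ = 2 * ‖u - w‖ := by ring

end SatLemmas

open Set

/-- Derivative of the piecewise potential. -/
lemma psi_hasDerivAt (k₁ um : ℝ) (hk : 0 < k₁) (hum : 0 < um) (s : ℝ) :
    HasDerivAt (fun x : ℝ => if x ≤ (um/k₁)^2 then k₁*x/2 else um*Real.sqrt x - um^2/(2*k₁))
      (if s ≤ (um/k₁)^2 then k₁/2 else um/(2*Real.sqrt s)) s := by
  set s₀ : ℝ := (um/k₁)^2 with hs₀
  have hs₀pos : 0 < s₀ := by positivity
  have hsqrt₀ : Real.sqrt s₀ = um/k₁ := by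
    rw [hs₀, Real.sqrt_sq (by positivity)]
  have hval₀ : um * Real.sqrt s₀ - um^2/(2*k₁) = k₁ * s₀ / 2 := by
    rw [hsqrt₀, hs₀]
    field_simp
    ring
  rcases lt_trichotomy s s₀ with h | h | h
  · rw [if_pos h.le]
    have hlin : HasDerivAt (fun x : ℝ => k₁*x/2) (k₁/2) s := by
      simpa using ((hasDerivAt_id s).const_mul k₁).div_const 2
    apply hlin.congr_of_eventuallyEq
    filter_upwards [eventually_lt_nhds h] with x hx
    rw [if_pos hx.le]
  · rw [if_pos h.le]
    -- junction point: combine one-sided derivatives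
    have hleft : HasDerivWithinAt (fun x : ℝ => if x ≤ s₀ then k₁*x/2 else um*Real.sqrt x - um^2/(2*k₁)) (k₁/2) (Iic s₀) s := by
      have hlin : HasDerivWithinAt (fun x : ℝ => k₁*x/2) (k₁/2) (Iic s₀) s := by
        exact (by simpa using ((hasDerivAt_id s).const_mul k₁).div_const 2 : HasDerivAt (fun x : ℝ => k₁*x/2) (k₁/2) s).hasDerivWithinAt
      apply hlin.congr (fun x hx => by rw [if_pos (mem_Iic.1 hx)])
      rw [h, if_pos le_rfl]
    have hright : HasDerivWithinAt (fun x : ℝ => if x ≤ s₀ then k₁*x/2 else um*Real.sqrt x - um^2/(2*k₁)) (k₁/2) (Ici s₀) s := by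
      have hsq : HasDerivAt (fun x : ℝ => um*Real.sqrt x - um^2/(2*k₁)) (k₁/2) s := by
        have h1 : HasDerivAt Real.sqrt (1/(2*Real.sqrt s)) s := by
          rw [h]
          exact Real.hasDerivAt_sqrt (ne_of_gt hs₀pos)
        have h2 := (h1.const_mul um).sub_const (um^2/(2*k₁))
        refine h2.congr_deriv ?_
        rw [h, hsqrt₀]
        field_simp
      apply hsq.hasDerivWithinAt.congr
      · intro x hx
        rcases eq_or_lt_of_le (mem_Ici.1 hx) with heq | hlt
        · rw [← heq, if_pos le_rfl, ← heq] at *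
          rw [hval₀]
        · rw [if_neg (not_le.2 hlt)]
      · rw [h, if_pos le_rfl, hval₀]
    have := hleft.union hright
    rw [Iic_union_Ici] at this
    rwa [hasDerivWithinAt_univ] at this
  · rw [if_neg (not_le.2 h)]
    have hspos : 0 < s := lt_trans hs₀pos h
    have hsq : HasDerivAt (fun x : ℝ => um*Real.sqrt x - um^2/(2*k₁)) (um/(2*Real.sqrt s)) s := by
      have h1 : HasDerivAt Real.sqrt (1/(2*Real.sqrt s)) s := Real.hasDerivAt_sqrt (ne_of_gt hspos)
      have h2 := (h1.const_mul um).sub_const (um^2/(2*k₁))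
      refine h2.congr_deriv ?_
      ring
    apply hsq.congr_of_eventuallyEq
    filter_upwards [eventually_gt_nhds h] with x hx
    rw [if_neg (not_le.2 hx)]


noncomputable def satPot (k₁ um x : ℝ) : ℝ :=
  if x ≤ (um/k₁)^2 then k₁*x/2 else um*Real.sqrt x - um^2/(2*k₁)

noncomputable def satPot' (k₁ um x : ℝ) : ℝ :=
  if x ≤ (um/k₁)^2 then k₁/2 else um/(2*Real.sqrt x)

lemma satPot_hasDerivAt (k₁ um : ℝ) (hk : 0 < k₁) (hum : 0 < um) (s : ℝ) :
    HasDerivAt (satPot k₁ um) (satPot' k₁ um s) s := by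
  exact psi_hasDerivAt k₁ um hk hum s

lemma satPot_nonneg (k₁ um : ℝ) (hk : 0 < k₁) (hum : 0 < um) (s : ℝ) (hs : 0 ≤ s) :
    0 ≤ satPot k₁ um s := by
  unfold satPot
  split_ifs with h
  · positivity
  · push_neg at h
    have h0 : (0:ℝ) < (um/k₁)^2 := by positivity
    have h1 : um/k₁ ≤ Real.sqrt s := by
      rw [← Real.sqrt_sq (le_of_lt (div_pos hum hk))]
      exact Real.sqrt_le_sqrt h.le
    have h2 : um * (um/k₁) ≤ um * Real.sqrt s := mul_le_mul_of_nonneg_left h1 hum.le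
    have h3 : um^2/(2*k₁) ≤ um^2/k₁ := div_le_div_of_nonneg_left (sq_nonneg um) hk (by linarith)
    have h4 : um^2/k₁ = um * (um/k₁) := by ring
    linarith

/-- Every trajectory of ṙ̄ = v, v̇ = σ(−k₁ r̄) − C_d v with the saturated
control converges to the origin with zero velocity: r̄(t) → 0 and v(t) → 0 as t → ∞. -/
theorem stmt_15 (k₁ Cd um : ℝ) (hk₁ : 0 < k₁) (hCd : 0 < Cd) (hum : 0 < um)
    (sat : EuclideanSpace ℝ (Fin 2) → EuclideanSpace ℝ (Fin 2))
    (hsat : ∀ u, sat u = if ‖u‖ ≤ um then u else (um / ‖u‖) • u)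
    (rb v : ℝ → EuclideanSpace ℝ (Fin 2))
    (hrb : Differentiable ℝ rb) (hv : Differentiable ℝ v)
    (hdr : ∀ t, 0 ≤ t → deriv rb t = v t)
    (hdv : ∀ t, 0 ≤ t → deriv v t = sat (-(k₁ • rb t)) - Cd • v t) :
    Filter.Tendsto rb Filter.atTop (nhds 0) ∧
    Filter.Tendsto v Filter.atTop (nhds 0) := by
  -- basic derivative facts
  have hrb' : ∀ t, 0 ≤ t → HasDerivAt rb (v t) t := by
    intro t ht
    have := (hrb t).hasDerivAt
    rwa [hdr t ht] at this
  have hv' : ∀ t, 0 ≤ t → HasDerivAt v (sat (-(k₁ • rb t)) - Cd • v t) t := by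
    intro t ht
    have := (hv t).hasDerivAt
    rwa [hdv t ht] at this
  have hnormsmul : ∀ t, ‖k₁ • rb t‖ = k₁ * ‖rb t‖ := by
    intro t
    rw [norm_smul, Real.norm_eq_abs, abs_of_pos hk₁]
  -- the energy function
  set Ef : ℝ → ℝ := fun t => satPot k₁ um ⟪rb t, rb t⟫ + ⟪v t, v t⟫/2 with hEfdef
  have hcase : ∀ t, (⟪rb t, rb t⟫ ≤ (um/k₁)^2 ↔ ‖k₁ • rb t‖ ≤ um) := by
    intro t
    constructor
    · intro h
      rw [hnormsmul]
      have h2 : ‖rb t‖ ≤ um/k₁ := by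
        have := Real.sqrt_le_sqrt h
        rwa [real_inner_self_eq_norm_sq, Real.sqrt_sq (norm_nonneg _),
          Real.sqrt_sq (by positivity)] at this
      calc k₁ * ‖rb t‖ ≤ k₁ * (um/k₁) := mul_le_mul_of_nonneg_left h2 hk₁.le
        _ = um := by field_simp
    · intro h
      rw [hnormsmul] at h
      rw [real_inner_self_eq_norm_sq]
      have h2 : ‖rb t‖ ≤ um/k₁ := by
        rw [le_div_iff₀ hk₁, mul_comm]
        exact h
      exact pow_le_pow_left₀ (norm_nonneg _) h2 2
  -- derivative of energy
  have hE' : ∀ t, 0 ≤ t → HasDerivAt Ef (-(Cd * ⟪v t, v t⟫)) t := by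
    intro t ht
    have hq : HasDerivAt (fun τ => ⟪rb τ, rb τ⟫) (2 * ⟪rb t, v t⟫) t := by
      have := (hrb' t ht).inner (𝕜 := ℝ) (hrb' t ht)
      refine this.congr_deriv ?_
      rw [real_inner_comm (v t) (rb t)]
      ring
    have hkin : HasDerivAt (fun τ => ⟪v τ, v τ⟫/2)
        (⟪v t, sat (-(k₁ • rb t)) - Cd • v t⟫) t := by
      have := ((hv' t ht).inner (𝕜 := ℝ) (hv' t ht)).div_const 2
      refine this.congr_deriv ?_
      rw [real_inner_comm (sat (-(k₁ • rb t)) - Cd • v t) (v t)]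
      ring
    have hcomp : HasDerivAt (fun τ => satPot k₁ um ⟪rb τ, rb τ⟫)
        (satPot' k₁ um ⟪rb t, rb t⟫ * (2 * ⟪rb t, v t⟫)) t :=
      (satPot_hasDerivAt k₁ um hk₁ hum _).comp t hq
    have hsum := hcomp.add hkin
    refine hsum.congr_deriv ?_
    -- algebra
    have hsneg : sat (-(k₁ • rb t)) = - sat (k₁ • rb t) := sat_neg um hum sat hsat _
    have hpot : satPot' k₁ um ⟪rb t, rb t⟫ * (2 * ⟪rb t, v t⟫)
        = ⟪sat (k₁ • rb t), v t⟫ := by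
      unfold satPot'
      by_cases h : ⟪rb t, rb t⟫ ≤ (um/k₁)^2
      · rw [if_pos h, hsat, if_pos ((hcase t).1 h), real_inner_smul_left]
        ring
      · have hgt : um < ‖k₁ • rb t‖ := not_le.1 (fun hc => h ((hcase t).2 hc))
        have hrbpos : 0 < ‖rb t‖ := by
          rw [hnormsmul] at hgt
          nlinarith
        rw [if_neg h, hsat, if_neg (not_le.2 hgt)]
        have hsqrt : Real.sqrt ⟪rb t, rb t⟫ = ‖rb t‖ := by
          rw [real_inner_self_eq_norm_sq, Real.sqrt_sq (norm_nonneg _)]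
        rw [hsqrt, real_inner_smul_left, real_inner_smul_left, hnormsmul]
        field_simp
    have hvin : ⟪v t, sat (-(k₁ • rb t)) - Cd • v t⟫
        = -⟪sat (k₁ • rb t), v t⟫ - Cd * ⟪v t, v t⟫ := by
      rw [hsneg, inner_sub_right, inner_neg_right, real_inner_smul_right,
        real_inner_comm (v t) (sat (k₁ • rb t))]
    rw [hpot, hvin]
    ring
  -- energy is nonincreasing on [0,∞)
  have hEanti : AntitoneOn Ef (Ici 0) := by
    apply antitoneOn_of_deriv_nonpos (convex_Ici 0)
    · intro x hx
      exact ((hE' x hx).continuousAt).continuousWithinAt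
    · intro x hx
      rw [interior_Ici] at hx
      exact ((hE' x (le_of_lt hx)).differentiableAt).differentiableWithinAt
    · intro x hx
      rw [interior_Ici] at hx
      rw [(hE' x (le_of_lt hx)).deriv]
      have := real_inner_self_nonneg (x := v x)
      nlinarith
  have hEnonneg : ∀ t, 0 ≤ t → 0 ≤ Ef t := by
    intro t ht
    have h1 := satPot_nonneg k₁ um hk₁ hum _ (real_inner_self_nonneg (x := rb t))
    have h2 := real_inner_self_nonneg (x := v t)
    simp only [hEfdef]
    linarith
  have hE0 : ∀ t, 0 ≤ t → Ef t ≤ Ef 0 := fun t ht => hEanti self_mem_Ici ht ht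
  -- bounds on v
  set Vm : ℝ := Real.sqrt (2 * Ef 0) with hVmdef
  have hVm0 : 0 ≤ Vm := Real.sqrt_nonneg _
  have hvb : ∀ t, 0 ≤ t → ‖v t‖ ≤ Vm := by
    intro t ht
    have h1 := satPot_nonneg k₁ um hk₁ hum _ (real_inner_self_nonneg (x := rb t))
    have h2 : ‖v t‖^2 ≤ 2 * Ef 0 := by
      have h3 := hE0 t ht
      have h4 : ⟪v t, v t⟫ = ‖v t‖^2 := real_inner_self_eq_norm_sq _
      simp only [hEfdef] at h3 ⊢
      linarith
    calc ‖v t‖ = Real.sqrt (‖v t‖^2) := (Real.sqrt_sq (norm_nonneg _)).symm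
      _ ≤ Vm := Real.sqrt_le_sqrt h2
  set Mv : ℝ := um + Cd * Vm with hMvdef
  have hMv0 : 0 ≤ Mv := by positivity
  -- Lipschitz bounds for v and rb on [0,∞)
  have hvlip : ∀ s t, 0 ≤ s → 0 ≤ t → ‖v s - v t‖ ≤ Mv * |s - t| := by
    intro a b ha hb
    have := (convex_Ici (0:ℝ)).norm_image_sub_le_of_norm_hasDerivWithin_le
      (f := v) (f' := fun τ => sat (-(k₁ • rb τ)) - Cd • v τ)
      (fun x hx => (hv' x hx).hasDerivWithinAt)
      (fun x hx => by
        calc ‖sat (-(k₁ • rb x)) - Cd • v x‖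
            ≤ ‖sat (-(k₁ • rb x))‖ + ‖Cd • v x‖ := norm_sub_le _ _
          _ ≤ um + Cd * Vm := by
              have h1 := sat_norm_le um hum sat hsat (-(k₁ • rb x))
              have h2 : ‖Cd • v x‖ = Cd * ‖v x‖ := by
                rw [norm_smul, Real.norm_eq_abs, abs_of_pos hCd]
              have h3 := hvb x hx
              rw [h2]
              have : Cd * ‖v x‖ ≤ Cd * Vm := mul_le_mul_of_nonneg_left h3 hCd.le
              linarith) hb ha
    rwa [Real.norm_eq_abs] at this
  have hrblip : ∀ s t, 0 ≤ s → 0 ≤ t → ‖rb s - rb t‖ ≤ Vm * |s - t| := by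
    intro a b ha hb
    have := (convex_Ici (0:ℝ)).norm_image_sub_le_of_norm_hasDerivWithin_le
      (f := rb) (f' := v)
      (fun x hx => (hrb' x hx).hasDerivWithinAt)
      (fun x hx => hvb x hx) hb ha
    rwa [Real.norm_eq_abs] at this
  -- energy converges
  have hEconv : ∃ L, Tendsto Ef atTop (nhds L) := by
    set F : ℝ → ℝ := fun t => Ef (max t 0) with hFdef
    have hFanti : Antitone F := by
      intro a b hab
      exact hEanti (le_max_right a 0) (le_max_right b 0) (max_le_max hab le_rfl)
    have hFbdd : BddBelow (range F) := by
      refine ⟨0, ?_⟩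
      rintro x ⟨t, rfl⟩
      exact hEnonneg _ (le_max_right _ _)
    refine ⟨⨅ t, F t, (tendsto_atTop_ciInf hFanti hFbdd).congr' ?_⟩
    filter_upwards [eventually_ge_atTop (0:ℝ)] with t ht
    simp only [hFdef, max_eq_left ht]
  obtain ⟨L, hL⟩ := hEconv
  -- Barbalat I: ‖v‖² → 0
  set g1 : ℝ → ℝ := fun t => -(Cd * ⟪v t, v t⟫) with hg1def
  have hinnerdiff : ∀ a b : EuclideanSpace ℝ (Fin 2),
      ⟪a, a⟫ - ⟪b, b⟫ = ⟪a - b, a + b⟫ := by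
    intro a b
    rw [inner_sub_left, inner_add_right, inner_add_right, real_inner_comm b a]
    ring
  have hg1lip : ∀ s t, 0 ≤ s → 0 ≤ t → ‖g1 s - g1 t‖ ≤ (Cd * (2*Vm) * Mv) * |s - t| := by
    intro a b ha hb
    rw [Real.norm_eq_abs]
    have h1 : g1 a - g1 b = -(Cd * (⟪v a, v a⟫ - ⟪v b, v b⟫)) := by
      simp only [hg1def]; ring
    rw [h1, abs_neg, abs_mul, abs_of_pos hCd, hinnerdiff]
    have h2 : |⟪v a - v b, v a + v b⟫| ≤ ‖v a - v b‖ * ‖v a + v b‖ :=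
      abs_real_inner_le_norm _ _
    have h3 : ‖v a + v b‖ ≤ 2 * Vm := by
      calc ‖v a + v b‖ ≤ ‖v a‖ + ‖v b‖ := norm_add_le _ _
        _ ≤ 2 * Vm := by linarith [hvb a ha, hvb b hb]
    have h4 := hvlip a b ha hb
    calc Cd * |⟪v a - v b, v a + v b⟫| ≤ Cd * (‖v a - v b‖ * ‖v a + v b‖) :=
          mul_le_mul_of_nonneg_left h2 hCd.le
      _ ≤ Cd * ((Mv * |a - b|) * (2 * Vm)) := by
          apply mul_le_mul_of_nonneg_left _ hCd.le
          exact mul_le_mul h4 h3 (norm_nonneg _) (by positivity)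
      _ = (Cd * (2*Vm) * Mv) * |a - b| := by ring
  have hg1tend : Tendsto g1 atTop (nhds 0) :=
    barbalat Ef g1 (Cd * (2*Vm) * Mv) (by positivity) hE' hg1lip L hL
  have hvlim : Tendsto v atTop (nhds 0) := by
    rw [tendsto_zero_iff_norm_tendsto_zero]
    have h2 : Tendsto (fun t => ⟪v t, v t⟫) atTop (nhds 0) := by
      have h3 := hg1tend.const_mul (-(Cd⁻¹))
      rw [mul_zero] at h3
      refine h3.congr (fun t => ?_)
      show -Cd⁻¹ * -(Cd * ⟪v t, v t⟫) = ⟪v t, v t⟫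
      field_simp
    have h4 : Tendsto (fun t => Real.sqrt ⟪v t, v t⟫) atTop (nhds 0) := by
      have h5 : Tendsto Real.sqrt (nhds 0) (nhds 0) := by
        simpa using (Real.continuous_sqrt.tendsto 0)
      exact h5.comp h2
    refine h4.congr (fun t => ?_)
    rw [real_inner_self_eq_norm_sq, Real.sqrt_sq (norm_nonneg _)]
  -- Barbalat II: deriv v → 0
  set g2 : ℝ → EuclideanSpace ℝ (Fin 2) := fun t => sat (-(k₁ • rb t)) - Cd • v t with hg2def
  have hg2lip : ∀ s t, 0 ≤ s → 0 ≤ t →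
      ‖g2 s - g2 t‖ ≤ (2 * (k₁ * Vm) + Cd * Mv) * |s - t| := by
    intro a b ha hb
    have h1 : g2 a - g2 b
        = (sat (-(k₁ • rb a)) - sat (-(k₁ • rb b))) - Cd • (v a - v b) := by
      simp only [hg2def, smul_sub]
      abel
    rw [h1]
    have h2 : ‖sat (-(k₁ • rb a)) - sat (-(k₁ • rb b))‖
        ≤ 2 * ‖(-(k₁ • rb a)) - (-(k₁ • rb b))‖ :=
      sat_lipschitz um hum sat hsat _ _
    have h3 : ‖(-(k₁ • rb a)) - (-(k₁ • rb b))‖ = k₁ * ‖rb a - rb b‖ := by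
      rw [show (-(k₁ • rb a)) - (-(k₁ • rb b)) = k₁ • (rb b - rb a) by
        rw [smul_sub]; abel]
      rw [norm_smul, Real.norm_eq_abs, abs_of_pos hk₁, norm_sub_rev]
    have h4 : ‖Cd • (v a - v b)‖ = Cd * ‖v a - v b‖ := by
      rw [norm_smul, Real.norm_eq_abs, abs_of_pos hCd]
    calc ‖(sat (-(k₁ • rb a)) - sat (-(k₁ • rb b))) - Cd • (v a - v b)‖
        ≤ ‖sat (-(k₁ • rb a)) - sat (-(k₁ • rb b))‖ + ‖Cd • (v a - v b)‖ :=
          norm_sub_le _ _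
      _ ≤ 2 * (k₁ * ‖rb a - rb b‖) + Cd * ‖v a - v b‖ := by
          rw [h4]
          have := h2
          rw [h3] at this
          linarith
      _ ≤ 2 * (k₁ * (Vm * |a - b|)) + Cd * (Mv * |a - b|) := by
          have h5 := hrblip a b ha hb
          have h6 := hvlip a b ha hb
          have h7 : k₁ * ‖rb a - rb b‖ ≤ k₁ * (Vm * |a - b|) :=
            mul_le_mul_of_nonneg_left h5 hk₁.le
          have h8 : Cd * ‖v a - v b‖ ≤ Cd * (Mv * |a - b|) :=
            mul_le_mul_of_nonneg_left h6 hCd.le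
          linarith
      _ = (2 * (k₁ * Vm) + Cd * Mv) * |a - b| := by ring
  have hg2tend : Tendsto g2 atTop (nhds 0) :=
    barbalat v g2 (2 * (k₁ * Vm) + Cd * Mv) (by positivity) hv' hg2lip 0 hvlim
  -- conclude sat(-(k₁ rb)) → 0
  have hsattend : Tendsto (fun t => sat (-(k₁ • rb t))) atTop (nhds 0) := by
    have h1 := hg2tend.add (hvlim.const_smul Cd)
    rw [show (0:EuclideanSpace ℝ (Fin 2)) + Cd • (0:EuclideanSpace ℝ (Fin 2)) = 0 by simp] at h1
    refine h1.congr (fun t => ?_)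
    show g2 t + Cd • v t = _
    simp only [hg2def]
    abel
  -- eventually the saturation is inactive
  have hev : ∀ᶠ t in atTop, sat (-(k₁ • rb t)) = -(k₁ • rb t) := by
    have hn : Tendsto (fun t => ‖sat (-(k₁ • rb t))‖) atTop (nhds 0) := by
      simpa using hsattend.norm
    filter_upwards [hn.eventually_lt_const hum] with t ht
    exact sat_eq_of_norm_lt um hum sat hsat _ ht
  have hrbneg : Tendsto (fun t => -(k₁ • rb t)) atTop (nhds 0) :=
    hsattend.congr' hev
  have hrblim : Tendsto rb atTop (nhds 0) := by
    have h1 := hrbneg.const_smul (-(k₁⁻¹))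
    rw [smul_zero] at h1
    refine h1.congr (fun t => ?_)
    rw [smul_neg, neg_smul, neg_neg, smul_smul, inv_mul_cancel₀ (ne_of_gt hk₁), one_smul]
  exact ⟨hrblim, hvlim⟩
end
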